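/- arXiv:2009.00372 — 6 statements merged into one kernel-verified Lean document; each statement's English description precedes it below -/
import Mathlib

section
/- Consider the Lie bracket relations on a 3-dimensional space spanned by ξ, E1, E2: [E1,E2] = p1·E1 + p2·E2 + 2u·ξ, [ξ,E1] = a·E1 + b·E2, [ξ,E2] = c·E1 + d·E2, where p1,p2,u,a,b,c,d are real constants. The Jacobi identity holds for this bracket if and only if u·(a+d) = 0 and (A − (a+d)I)·p = 0, where A is the 2×2 matrix with rows (a, c) and (b, d) acting on the column vector p = (p1, p2). -/
private lemma fin3_mk_two (h : 2 < 3) : (⟨2, h⟩ : Fin 3) = 2 := rfl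

/-- Bracket on ℝ³ with basis ξ (coord 0), E1 (coord 1), E2 (coord 2):
[E1,E2] = p1 E1 + p2 E2 + 2u ξ, [ξ,E1] = a E1 + b E2, [ξ,E2] = c E1 + d E2.
The Jacobi identity holds iff u(a+d) = 0 and (A − (a+d)I)p = 0, where
A = ((a,c),(b,d)) and p = (p1,p2). -/
theorem jacobi_iff_conditions (p1 p2 u a b c d : ℝ)
    (br : (Fin 3 → ℝ) → (Fin 3 → ℝ) → (Fin 3 → ℝ))
    (hbr : ∀ x y, br x y =
      (x 1 * y 2 - x 2 * y 1) • ![2 * u, p1, p2] +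
      (x 0 * y 1 - x 1 * y 0) • ![0, a, b] +
      (x 0 * y 2 - x 2 * y 0) • ![0, c, d]) :
    (∀ x y z, br x (br y z) + br y (br z x) + br z (br x y) = 0) ↔
      (u * (a + d) = 0 ∧
       (a - (a + d)) * p1 + c * p2 = 0 ∧
       b * p1 + (d - (a + d)) * p2 = 0) := by
  constructor
  · intro h
    have h0 := h ![1,0,0] ![0,1,0] ![0,0,1]
    simp only [hbr] at h0
    refine ⟨?_, ?_, ?_⟩
    · have := congrFun h0 0
      simp [Matrix.cons_val_zero, Matrix.cons_val_one, Matrix.head_cons] at this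
      linarith [this]
    · have := congrFun h0 1
      simp [Matrix.cons_val_zero, Matrix.cons_val_one, Matrix.head_cons] at this
      linarith [this]
    · have := congrFun h0 2
      simp [Matrix.cons_val_zero, Matrix.cons_val_one, Matrix.head_cons] at this
      linarith [this]
  · rintro ⟨h1, h2, h3⟩ x y z
    funext i
    simp only [hbr, Pi.add_apply, Pi.smul_apply, smul_eq_mul]
    fin_cases i <;>
      simp only [Matrix.cons_val_zero, Matrix.cons_val_one, Matrix.head_cons,
        Matrix.cons_val_two, Matrix.tail_cons, Pi.zero_apply, Fin.isValue, Fin.mk_zero, Fin.mk_one, fin3_mk_two]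
    · linear_combination (-2 * (x 0 * (y 1 * z 2 - y 2 * z 1) - x 1 * (y 0 * z 2 - y 2 * z 0) + x 2 * (y 0 * z 1 - y 1 * z 0))) * h1
    · linear_combination (x 0 * (y 1 * z 2 - y 2 * z 1) - x 1 * (y 0 * z 2 - y 2 * z 0) + x 2 * (y 0 * z 1 - y 1 * z 0)) * h2
    · linear_combination (x 0 * (y 1 * z 2 - y 2 * z 1) - x 1 * (y 0 * z 2 - y 2 * z 0) + x 2 * (y 0 * z 1 - y 1 * z 0)) * h3
end

section
/- Let g be the 3-dimensional Lie algebra spanned by ξ, E1, E2 with brackets [E1,E2] = 2k·ξ, [E2,ξ] = −(λ+c)·E1, [ξ,E1] = (λ−c)·E2, with Riemannian inner product making (ξ,E1,E2) orthonormal. Then the Levi-Civita connection and curvature of the associated left-invariant metric satisfy R(E1,ξ)ξ = (k²−λ²+2λ(k+c))·E1, R(E2,ξ)ξ = (k²−λ²−2λ(k+c))·E2, and R(E1,E2)ξ = 0. -/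
noncomputable section

/-- Reeb vector ξ and frame E1, E2 as the standard basis of ℝ³. -/
def ξ : Fin 3 → ℝ := ![1, 0, 0]
def E1 : Fin 3 → ℝ := ![0, 1, 0]
def E2 : Fin 3 → ℝ := ![0, 0, 1]

/-- Inner product making (ξ, E1, E2) orthonormal. -/
def ip (x y : Fin 3 → ℝ) : ℝ := x 0 * y 0 + x 1 * y 1 + x 2 * y 2

/-- Bracket [E1,E2] = 2k ξ, [E2,ξ] = −(λ+c) E1, [ξ,E1] = (λ−c) E2,
extended bilinearly and antisymmetrically. -/
def br (k lam c : ℝ) (x y : Fin 3 → ℝ) : Fin 3 → ℝ :=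
  ![2 * k * (x 1 * y 2 - x 2 * y 1),
    (lam + c) * (x 0 * y 2 - x 2 * y 0),
    (lam - c) * (x 0 * y 1 - x 1 * y 0)]

/-- Curvature of the Levi-Civita connection (Koszul formula) of the left-invariant
metric: R(E1,ξ)ξ = (k²−λ²+2λ(k+c))E1, R(E2,ξ)ξ = (k²−λ²−2λ(k+c))E2, R(E1,E2)ξ = 0. -/
theorem curvature_of_unimodular_frame (k lam c : ℝ)
    (nabla : (Fin 3 → ℝ) → (Fin 3 → ℝ) → (Fin 3 → ℝ))
    (hK : ∀ X Y Z, 2 * ip (nabla X Y) Z =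
      ip (br k lam c X Y) Z - ip (br k lam c Y Z) X + ip (br k lam c Z X) Y)
    (R : (Fin 3 → ℝ) → (Fin 3 → ℝ) → (Fin 3 → ℝ) → (Fin 3 → ℝ))
    (hR : ∀ X Y Z, R X Y Z =
      nabla X (nabla Y Z) - nabla Y (nabla X Z) - nabla (br k lam c X Y) Z) :
    R E1 ξ ξ = (k ^ 2 - lam ^ 2 + 2 * lam * (k + c)) • E1 ∧
    R E2 ξ ξ = (k ^ 2 - lam ^ 2 - 2 * lam * (k + c)) • E2 ∧
    R E1 E2 ξ = 0 := by
  have hN : ∀ X Y, nabla X Y =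
      ![(ip (br k lam c X Y) ξ - ip (br k lam c Y ξ) X + ip (br k lam c ξ X) Y) / 2,
        (ip (br k lam c X Y) E1 - ip (br k lam c Y E1) X + ip (br k lam c E1 X) Y) / 2,
        (ip (br k lam c X Y) E2 - ip (br k lam c Y E2) X + ip (br k lam c E2 X) Y) / 2] := by
    intro X Y
    funext i
    fin_cases i
    · have h := hK X Y ξ
      simp [ip, ξ] at h ⊢
      linarith
    · have h := hK X Y E1
      simp [ip, E1] at h ⊢
      linarith
    · have h := hK X Y E2
      simp [ip, E2] at h ⊢
      linarith
  refine ⟨?_, ?_, ?_⟩ <;>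
  · rw [hR]
    simp only [hN]
    funext i
    fin_cases i <;>
      simp [ip, br, ξ, E1, E2, Pi.sub_apply, Pi.smul_apply, smul_eq_mul] <;> ring
end
end

section
/- With the Lie algebra of the previous setting ([E1,E2]=2kξ, [E2,ξ]=−(λ+c)E1, [ξ,E1]=(λ−c)E2, orthonormal frame (ξ,E1,E2)), the principal Ricci curvatures are Ric(ξ,ξ) = 2(k²−λ²), Ric(E1,E1) = −2(k+c)(k−λ), Ric(E2,E2) = −2(k+c)(k+λ), and the scalar curvature equals −2(k²+λ²) − 4kc. -/
noncomputable section

/-- Principal Ricci curvatures Ric(ξ,ξ) = 2(k²−λ²), Ric(E1,E1) = −2(k+c)(k−λ),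
Ric(E2,E2) = −2(k+c)(k+λ), and scalar curvature −2(k²+λ²) − 4kc. -/
theorem ricci_of_unimodular_frame (k lam c : ℝ)
    (nabla : (Fin 3 → ℝ) → (Fin 3 → ℝ) → (Fin 3 → ℝ))
    (hK : ∀ X Y Z, 2 * ip (nabla X Y) Z =
      ip (br k lam c X Y) Z - ip (br k lam c Y Z) X + ip (br k lam c Z X) Y)
    (R : (Fin 3 → ℝ) → (Fin 3 → ℝ) → (Fin 3 → ℝ) → (Fin 3 → ℝ))
    (hR : ∀ X Y Z, R X Y Z =
      nabla X (nabla Y Z) - nabla Y (nabla X Z) - nabla (br k lam c X Y) Z)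
    (Ric : (Fin 3 → ℝ) → ℝ)
    (hRic : ∀ X, Ric X = ip (R ξ X X) ξ + ip (R E1 X X) E1 + ip (R E2 X X) E2) :
    Ric ξ = 2 * (k ^ 2 - lam ^ 2) ∧
    Ric E1 = -2 * (k + c) * (k - lam) ∧
    Ric E2 = -2 * (k + c) * (k + lam) ∧
    Ric ξ + Ric E1 + Ric E2 = -2 * (k ^ 2 + lam ^ 2) - 4 * k * c := by

  have hnab : ∀ X Y, nabla X Y =
      ![(k + lam) * X 1 * Y 2 + (lam - k) * X 2 * Y 1,
        (k + c) * X 0 * Y 2 + (k - lam) * X 2 * Y 0,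
        -(k + c) * X 0 * Y 1 - (k + lam) * X 1 * Y 0] := by
    intro X Y
    funext i
    fin_cases i
    · have h := hK X Y ξ
      simp [ip, ξ, br] at h ⊢
      linarith
    · have h := hK X Y E1
      simp [ip, E1, br] at h ⊢
      linarith
    · have h := hK X Y E2
      simp [ip, E2, br] at h ⊢
      linarith
  have hc : ∀ X, Ric X = ip (R ξ X X) ξ + ip (R E1 X X) E1 + ip (R E2 X X) E2 := hRic
  refine ⟨?_, ?_, ?_, ?_⟩ <;>
    simp only [hRic, hR, hnab, ip, ξ, E1, E2, br, Pi.sub_apply, Matrix.cons_val_zero,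
      Matrix.cons_val_one, Matrix.head_cons, Matrix.cons_val_two, Matrix.tail_cons] <;>
    ring
end
end

section
/- In the Lie-algebraic setting with [E1,E2]=2kξ, [E2,ξ]=−(λ+c)E1, [ξ,E1]=(λ−c)E2 and orthonormal frame (ξ,E1,E2), define φ by φξ=0, φE1=E2, φE2=−E1, η the dual of ξ, and h = (1/2)L_ξφ. Then for all X, Y in the Lie algebra, R(X,Y)ξ = (k²−λ²)(η(Y)X − η(X)Y) + 2(k+c)(η(Y)hX − η(X)hY), i.e., the manifold is a (k²−λ², 2(k+c))-space. -/
noncomputable section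

/-- The structure tensor φ: φξ = 0, φE1 = E2, φE2 = −E1. -/
def φ (x : Fin 3 → ℝ) : Fin 3 → ℝ := ![0, -(x 2), x 1]

/-- The dual form η of ξ. -/
def η (x : Fin 3 → ℝ) : ℝ := x 0

/-- h = (1/2) L_ξ φ computed on left-invariant fields. -/
def h (k lam c : ℝ) (x : Fin 3 → ℝ) : Fin 3 → ℝ :=
  (1 / 2 : ℝ) • (br k lam c ξ (φ x) - φ (br k lam c ξ x))


def nab (k lam c : ℝ) (A B : Fin 3 → ℝ) : Fin 3 → ℝ :=
  ![(k + lam) * A 1 * B 2 + (lam - k) * A 2 * B 1,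
    (k + c) * A 0 * B 2 + (k - lam) * A 2 * B 0,
    -(k + c) * A 0 * B 1 - (k + lam) * A 1 * B 0]

/-- The manifold is a (k²−λ², 2(k+c))-space:
R(X,Y)ξ = (k²−λ²)(η(Y)X − η(X)Y) + 2(k+c)(η(Y)hX − η(X)hY). -/
theorem km_space_identity (k lam c : ℝ)
    (nabla : (Fin 3 → ℝ) → (Fin 3 → ℝ) → (Fin 3 → ℝ))
    (hK : ∀ X Y Z, 2 * ip (nabla X Y) Z =
      ip (br k lam c X Y) Z - ip (br k lam c Y Z) X + ip (br k lam c Z X) Y)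
    (R : (Fin 3 → ℝ) → (Fin 3 → ℝ) → (Fin 3 → ℝ) → (Fin 3 → ℝ))
    (hR : ∀ X Y Z, R X Y Z =
      nabla X (nabla Y Z) - nabla Y (nabla X Z) - nabla (br k lam c X Y) Z) :
    ∀ X Y, R X Y ξ =
      (k ^ 2 - lam ^ 2) • (η Y • X - η X • Y) +
      (2 * (k + c)) • (η Y • h k lam c X - η X • h k lam c Y) := by
  have hn : ∀ A B, nabla A B = nab k lam c A B := by
    intro A B
    funext i
    fin_cases i
    · have := hK A B ξ
      simp [ip, br, ξ, nab] at this ⊢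
      linarith
    · have := hK A B E1
      simp [ip, br, ξ, E1, nab] at this ⊢
      linarith
    · have := hK A B E2
      simp [ip, br, ξ, E2, nab] at this ⊢
      linarith
  intro X Y
  rw [hR, hn, hn, hn, hn, hn]
  funext i
  fin_cases i <;>
    simp [nab, br, ξ, φ, η, h, Matrix.cons_val_zero, Matrix.cons_val_one] <;> ring
end
end

section
/- Let κ < 1, and set λ = √(1−κ), c = μ/2 − 1, k = 1 in the Lie algebra [E1,E2]=2kξ, [E2,ξ]=−(λ+c)E1, [ξ,E1]=(λ−c)E2 with orthonormal frame (ξ,E1,E2). Then the principal Ricci curvatures are Ric(ξ,ξ)=2κ, Ric(E1,E1)=−μ(1−√(1−κ)), Ric(E2,E2)=−μ(1+√(1−κ)), and the scalar curvature equals 2(κ−μ). -/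
noncomputable section

/-- Contact metric case k = 1, λ = √(1−κ), c = μ/2 − 1, κ < 1: the principal Ricci
curvatures are 2κ, −μ(1−√(1−κ)), −μ(1+√(1−κ)) and the scalar curvature is 2(κ−μ). -/
theorem ricci_contact_metric_case (κ μ : ℝ) (hκ : κ < 1)
    (lam c : ℝ) (hlam : lam = Real.sqrt (1 - κ)) (hc : c = μ / 2 - 1)
    (nabla : (Fin 3 → ℝ) → (Fin 3 → ℝ) → (Fin 3 → ℝ))
    (hK : ∀ X Y Z, 2 * ip (nabla X Y) Z =
      ip (br 1 lam c X Y) Z - ip (br 1 lam c Y Z) X + ip (br 1 lam c Z X) Y)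
    (R : (Fin 3 → ℝ) → (Fin 3 → ℝ) → (Fin 3 → ℝ) → (Fin 3 → ℝ))
    (hR : ∀ X Y Z, R X Y Z =
      nabla X (nabla Y Z) - nabla Y (nabla X Z) - nabla (br 1 lam c X Y) Z)
    (Ric : (Fin 3 → ℝ) → ℝ)
    (hRic : ∀ X, Ric X = ip (R ξ X X) ξ + ip (R E1 X X) E1 + ip (R E2 X X) E2) :
    Ric ξ = 2 * κ ∧
    Ric E1 = -μ * (1 - Real.sqrt (1 - κ)) ∧
    Ric E2 = -μ * (1 + Real.sqrt (1 - κ)) ∧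
    Ric ξ + Ric E1 + Ric E2 = 2 * (κ - μ) := by

  have hl2 : κ = 1 - lam ^ 2 := by
    rw [hlam, Real.sq_sqrt (by linarith : (0:ℝ) ≤ 1 - κ)]; ring
  have hnab : ∀ X Y, nabla X Y =
      ![(1 + lam) * (X 1) * (Y 2) + (lam - 1) * (X 2) * (Y 1),
        (1 + c) * (X 0) * (Y 2) + (1 - lam) * (X 2) * (Y 0),
        -(1 + c) * (X 0) * (Y 1) - (1 + lam) * (X 1) * (Y 0)] := by
    intro X Y
    funext i
    fin_cases i
    · have h := hK X Y ξ
      simp [ip, br, ξ, E1, E2] at h ⊢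
      linarith
    · have h := hK X Y E1
      simp [ip, br, ξ, E1, E2] at h ⊢
      linarith
    · have h := hK X Y E2
      simp [ip, br, ξ, E1, E2] at h ⊢
      linarith
  rw [← hlam]
  refine ⟨?_, ?_, ?_, ?_⟩ <;>
  · simp only [hRic, hR, hnab, ip, br, ξ, E1, E2, Pi.sub_apply,
      Matrix.cons_val_zero, Matrix.cons_val_one, Matrix.head_cons,
      Matrix.cons_val_two, Matrix.tail_cons]
    subst hc
    try rw [hl2]
    ring
end
end

section
/- In the almost cosymplectic case k=0, λ=√(−κ) with κ<0, c=μ/2, the principal Ricci curvatures are r1 = 2κ, r2 = μ√(−κ), r3 = −μ√(−κ), the scalar curvature is 2κ, and the signature pattern of (r1,r2,r3) is either (−,0,0) (when μ=0) or a permutation of (−,−,+) (when μ≠0). -/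
noncomputable section

/-- Almost cosymplectic case k = 0, λ = √(−κ) (κ < 0), c = μ/2: the principal Ricci
curvatures are r1 = 2κ, r2 = μ√(−κ), r3 = −μ√(−κ), the scalar curvature is 2κ, and the
signature of (r1,r2,r3) is (−,0,0) when μ = 0 and a permutation of (−,−,+) when μ ≠ 0. -/
theorem ricci_almost_cosymplectic_case (κ μ : ℝ) (hκ : κ < 0)
    (lam c : ℝ) (hlam : lam = Real.sqrt (-κ)) (hc : c = μ / 2)
    (nabla : (Fin 3 → ℝ) → (Fin 3 → ℝ) → (Fin 3 → ℝ))
    (hK : ∀ X Y Z, 2 * ip (nabla X Y) Z =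
      ip (br 0 lam c X Y) Z - ip (br 0 lam c Y Z) X + ip (br 0 lam c Z X) Y)
    (R : (Fin 3 → ℝ) → (Fin 3 → ℝ) → (Fin 3 → ℝ) → (Fin 3 → ℝ))
    (hR : ∀ X Y Z, R X Y Z =
      nabla X (nabla Y Z) - nabla Y (nabla X Z) - nabla (br 0 lam c X Y) Z)
    (Ric : (Fin 3 → ℝ) → ℝ)
    (hRic : ∀ X, Ric X = ip (R ξ X X) ξ + ip (R E1 X X) E1 + ip (R E2 X X) E2) :
    Ric ξ = 2 * κ ∧
    Ric E1 = μ * Real.sqrt (-κ) ∧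
    Ric E2 = -μ * Real.sqrt (-κ) ∧
    Ric ξ + Ric E1 + Ric E2 = 2 * κ ∧
    (μ = 0 → Ric ξ < 0 ∧ Ric E1 = 0 ∧ Ric E2 = 0) ∧
    (μ ≠ 0 → Ric ξ < 0 ∧
      ((Ric E1 < 0 ∧ 0 < Ric E2) ∨ (0 < Ric E1 ∧ Ric E2 < 0))) := by

  have hl2 : lam * lam = -κ := by
    rw [hlam]; exact Real.mul_self_sqrt (by linarith)
  have hlpos : 0 < lam := by
    rw [hlam]; exact Real.sqrt_pos.mpr (by linarith)
  have hn : ∀ X Y : Fin 3 → ℝ, nabla X Y =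
      ![lam * (X 1 * Y 2 + X 2 * Y 1),
        c * (X 0 * Y 2) - lam * (X 2 * Y 0),
        -(c * (X 0 * Y 1)) - lam * (X 1 * Y 0)] := by
    intro X Y
    funext i
    fin_cases i
    · have h := hK X Y ξ
      simp [ip, br, ξ, Matrix.cons_val_zero, Matrix.cons_val_one] at h ⊢
      linarith
    · have h := hK X Y E1
      simp [ip, br, E1, Matrix.cons_val_zero, Matrix.cons_val_one] at h ⊢
      linarith
    · have h := hK X Y E2
      simp [ip, br, E2, Matrix.cons_val_zero, Matrix.cons_val_one] at h ⊢
      linarith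
  have h1 : Ric ξ = 2 * κ := by
    rw [hRic, hR, hR, hR]
    simp [hn, ip, br, ξ, E1, E2, Pi.sub_apply]
    ring_nf
    linear_combination (-2 : ℝ) * hl2
  have h2 : Ric E1 = μ * Real.sqrt (-κ) := by
    rw [hRic, hR, hR, hR]
    simp [hn, ip, br, ξ, E1, E2, Pi.sub_apply]
    rw [← hlam, hc] at *
    ring_nf
  have h3 : Ric E2 = -μ * Real.sqrt (-κ) := by
    rw [hRic, hR, hR, hR]
    simp [hn, ip, br, ξ, E1, E2, Pi.sub_apply]
    rw [← hlam, hc] at *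
    ring_nf
  have hs : Real.sqrt (-κ) > 0 := hlam ▸ hlpos
  refine ⟨h1, h2, h3, by rw [h1, h2, h3]; ring, ?_, ?_⟩
  · intro h0
    subst h0
    exact ⟨by rw [h1]; linarith, by rw [h2]; ring, by rw [h3]; ring⟩
  · intro hμ
    refine ⟨by rw [h1]; linarith, ?_⟩
    rcases lt_or_gt_of_ne hμ with h | h
    · exact Or.inl ⟨by rw [h2]; nlinarith, by rw [h3]; nlinarith⟩
    · exact Or.inr ⟨by rw [h2]; nlinarith, by rw [h3]; nlinarith⟩
end
end
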